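/- arXiv:0806.4730 — 2 statements merged into one kernel-verified Lean document; each statement's English description precedes it below -/
import Mathlib

section
/- (Coverage preservation of rearranged confidence bands.) Let ℓ, u, f : [0,1]^d → ℝ be bounded measurable with ℓ(x) ≤ f(x) ≤ u(x) for all x. Let ℓ*, u*, f* denote their π-rearrangements for a fixed permutation π. Then ℓ*(x) ≤ f*(x) ≤ u*(x) for all x ∈ [0,1]^d; in particular, if f is weakly increasing then f* = f almost everywhere and the rearranged band [ℓ*, u*] covers f. -/
open MeasureTheory

/-- Increasing rearrangement with respect to the `j`-th coordinate. -/
noncomputable def rearrCoord {d : ℕ} (j : Fin d) (f : (Fin d → ℝ) → ℝ)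
    (x : Fin d → ℝ) : ℝ :=
  sInf {y : ℝ | x j ≤
    (volume (Set.Icc (0:ℝ) 1 ∩ {t : ℝ | f (Function.update x j t) ≤ y})).toReal}

/-- The `π`-rearrangement `R_{π₁} ∘ ⋯ ∘ R_{π_d}`. -/
noncomputable def rearrPerm {d : ℕ} (π : Equiv.Perm (Fin d))
    (f : (Fin d → ℝ) → ℝ) : (Fin d → ℝ) → ℝ :=
  (List.ofFn (fun i => π i)).foldr (fun j g => rearrCoord j g) f



namespace RearrAux

variable {d : ℕ}

/-- The closed unit box. -/
def Box (d : ℕ) : Set (Fin d → ℝ) := Set.Icc 0 1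

/-- The half-open unit box (positive coordinates). -/
def Pos (d : ℕ) : Set (Fin d → ℝ) := {x | ∀ k, 0 < x k ∧ x k ≤ 1}

lemma mem_box_iff {x : Fin d → ℝ} : x ∈ Box d ↔ ∀ k, 0 ≤ x k ∧ x k ≤ 1 := by
  simp [Box, Set.mem_Icc, Pi.le_def, forall_and]

lemma pos_subset_box : Pos d ⊆ Box d := fun x hx =>
  mem_box_iff.2 fun k => ⟨(hx k).1.le, (hx k).2⟩

lemma update_mem_box {x : Fin d → ℝ} (hx : x ∈ Box d) {j : Fin d} {t : ℝ}
    (ht : t ∈ Set.Icc (0:ℝ) 1) : Function.update x j t ∈ Box d := by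
  rw [mem_box_iff] at hx ⊢
  intro k
  rcases eq_or_ne k j with rfl | h
  · simpa using ht
  · simpa [Function.update_of_ne h] using hx k

lemma update_mem_pos {x : Fin d → ℝ} (hx : x ∈ Pos d) {j : Fin d} {t : ℝ}
    (ht : t ∈ Set.Ioc (0:ℝ) 1) : Function.update x j t ∈ Pos d := by
  intro k
  rcases eq_or_ne k j with rfl | h
  · simpa using ht
  · simpa [Function.update_of_ne h] using hx k

lemma update_le_self {x : Fin d → ℝ} {j : Fin d} {t : ℝ} (ht : t ≤ x j) :
    Function.update x j t ≤ x := by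
  intro k
  rcases eq_or_ne k j with rfl | h
  · simpa using ht
  · simp [Function.update_of_ne h]

lemma update_le_update {x : Fin d → ℝ} {j : Fin d} {s t : ℝ} (hst : s ≤ t) :
    Function.update x j s ≤ Function.update x j t := by
  intro k
  rcases eq_or_ne k j with rfl | h
  · simpa using hst
  · simp [Function.update_of_ne h]

lemma le_update {x x' : Fin d → ℝ} (h : x' ≤ x) {j : Fin d} {t : ℝ} (ht : x' j ≤ t) :
    x' ≤ Function.update x j t := by
  intro k
  rcases eq_or_ne k j with rfl | hk
  · simpa using ht
  · simpa [Function.update_of_ne hk] using h k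

/-! ### Measure helper lemmas -/

lemma vol_ne_top (E : Set ℝ) : volume (Set.Icc (0:ℝ) 1 ∩ E) ≠ ⊤ := by
  refine ne_top_of_le_ne_top ?_ (measure_mono Set.inter_subset_left)
  simp [Real.volume_Icc]

lemma le_toReal_of_Ioc {E : Set ℝ} {a : ℝ} (ha0 : 0 ≤ a) (ha1 : a ≤ 1)
    (h : Set.Ioc (0:ℝ) a ⊆ E) : a ≤ (volume (Set.Icc (0:ℝ) 1 ∩ E)).toReal := by
  have h1 : Set.Ioc (0:ℝ) a ⊆ Set.Icc (0:ℝ) 1 ∩ E := fun t ht =>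
    ⟨⟨ht.1.le, ht.2.trans ha1⟩, h ht⟩
  have h2 := measure_mono (μ := volume) h1
  rw [Real.volume_Ioc] at h2
  calc a = (ENNReal.ofReal (a - 0)).toReal := by simp [ha0]
    _ ≤ _ := ENNReal.toReal_mono (vol_ne_top E) h2

lemma toReal_le_of_subset {E : Set ℝ} {s : ℝ} (hs : 0 ≤ s)
    (h : Set.Icc (0:ℝ) 1 ∩ E ⊆ Set.Icc 0 s) :
    (volume (Set.Icc (0:ℝ) 1 ∩ E)).toReal ≤ s := by
  have h2 := measure_mono (μ := volume) h
  rw [Real.volume_Icc] at h2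
  have h3 := ENNReal.toReal_mono (by simp) h2
  simpa [hs] using h3



variable {d : ℕ}

/-- The defining set of the rearrangement. -/
def Sset (j : Fin d) (g : (Fin d → ℝ) → ℝ) (x : Fin d → ℝ) : Set ℝ :=
  {y : ℝ | x j ≤
    (volume (Set.Icc (0:ℝ) 1 ∩ {t : ℝ | g (Function.update x j t) ≤ y})).toReal}

lemma rearrCoord_eq (j : Fin d) (g : (Fin d → ℝ) → ℝ) (x : Fin d → ℝ) :
    rearrCoord j g x = sInf (Sset j g x) := rfl

lemma mem_Sset {j : Fin d} {g : (Fin d → ℝ) → ℝ} {x : Fin d → ℝ} {y : ℝ}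
    (h0 : 0 ≤ x j) (h1 : x j ≤ 1)
    (h : ∀ t ∈ Set.Ioc (0:ℝ) (x j), g (Function.update x j t) ≤ y) :
    y ∈ Sset j g x :=
  le_toReal_of_Ioc h0 h1 (fun t ht => h t ht)

lemma Sset_lb {j : Fin d} {g : (Fin d → ℝ) → ℝ} {x : Fin d → ℝ} {M : ℝ}
    (hg : ∀ t ∈ Set.Ioc (0:ℝ) 1, -M ≤ g (Function.update x j t))
    (hxj : 0 < x j) : ∀ y ∈ Sset j g x, -M ≤ y := by
  intro y hy
  by_contra hlt
  push_neg at hlt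
  have hsub : Set.Icc (0:ℝ) 1 ∩ {t : ℝ | g (Function.update x j t) ≤ y}
      ⊆ Set.Icc (0:ℝ) 0 := by
    rintro t ⟨ht, hEt⟩
    rcases eq_or_lt_of_le ht.1 with rfl | hpos
    · exact ⟨le_refl _, le_refl _⟩
    · exact absurd hEt (not_le.2 (lt_of_lt_of_le hlt (hg t ⟨hpos, ht.2⟩)))
  have := (toReal_le_of_subset le_rfl hsub)
  exact absurd (hy.trans this) (not_le.2 hxj)


/-! ### Box versions (order and bound preservation) -/

lemma sInf_univ_real : sInf (Set.univ : Set ℝ) = 0 := by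
  apply Real.sInf_of_not_bddBelow
  rintro ⟨b, hb⟩
  have := hb (Set.mem_univ (b - 1))
  linarith

lemma Sset_univ {j : Fin d} {g : (Fin d → ℝ) → ℝ} {x : Fin d → ℝ}
    (hxj : x j = 0) : Sset j g x = Set.univ := by
  apply Set.eq_univ_of_forall
  intro y
  show x j ≤ _
  rw [hxj]
  exact ENNReal.toReal_nonneg

lemma rearrCoord_le_rearrCoord_box {g₁ g₂ : (Fin d → ℝ) → ℝ} {M : ℝ}
    (h12 : ∀ z ∈ Box d, g₁ z ≤ g₂ z)
    (hb1 : ∀ z ∈ Box d, |g₁ z| ≤ M) (hb2 : ∀ z ∈ Box d, |g₂ z| ≤ M)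
    (j : Fin d) : ∀ x ∈ Box d, rearrCoord j g₁ x ≤ rearrCoord j g₂ x := by
  intro x hx
  have hx' := mem_box_iff.1 hx
  rcases eq_or_lt_of_le (hx' j).1 with hxj | hxj
  · rw [rearrCoord_eq, rearrCoord_eq, Sset_univ hxj.symm, Sset_univ hxj.symm]
  · rw [rearrCoord_eq, rearrCoord_eq]
    refine csInf_le_csInf ?_ ?_ ?_
    · refine ⟨-M, fun y hy => ?_⟩
      refine Sset_lb (fun t ht => ?_) hxj y hy
      have hmem : Function.update x j t ∈ Box d :=
        update_mem_box hx ⟨ht.1.le, ht.2⟩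
      linarith [abs_le.1 (hb1 _ hmem)]
    · refine ⟨M, mem_Sset (hx' j).1 (hx' j).2 fun t ht => ?_⟩
      have hmem : Function.update x j t ∈ Box d :=
        update_mem_box hx ⟨ht.1.le, ht.2.trans (hx' j).2⟩
      exact (abs_le.1 (hb2 _ hmem)).2
    · intro y hy
      refine le_trans hy (ENNReal.toReal_mono (vol_ne_top _) (measure_mono ?_))
      rintro t ⟨ht, hEt⟩
      have hmem : Function.update x j t ∈ Box d := update_mem_box hx ht
      exact ⟨ht, le_trans (h12 _ hmem) hEt⟩

lemma abs_rearrCoord_le_box {g : (Fin d → ℝ) → ℝ} {M : ℝ}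
    (hb : ∀ z ∈ Box d, |g z| ≤ M)
    (j : Fin d) : ∀ x ∈ Box d, |rearrCoord j g x| ≤ M := by
  have hM0 : 0 ≤ M := by
    have h0 : (0 : Fin d → ℝ) ∈ Box d := mem_box_iff.2 fun k => by norm_num
    exact le_trans (abs_nonneg _) (hb _ h0)
  intro x hx
  have hx' := mem_box_iff.1 hx
  rcases eq_or_lt_of_le (hx' j).1 with hxj | hxj
  · rw [rearrCoord_eq, Sset_univ hxj.symm, sInf_univ_real]
    simpa using hM0
  · have hbdd : BddBelow (Sset j g x) := by
      refine ⟨-M, fun y hy => ?_⟩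
      refine Sset_lb (fun t ht => ?_) hxj y hy
      have hmem : Function.update x j t ∈ Box d := update_mem_box hx ⟨ht.1.le, ht.2⟩
      linarith [abs_le.1 (hb _ hmem)]
    have hMmem : M ∈ Sset j g x := by
      refine mem_Sset (hx' j).1 (hx' j).2 fun t ht => ?_
      have hmem : Function.update x j t ∈ Box d :=
        update_mem_box hx ⟨ht.1.le, ht.2.trans (hx' j).2⟩
      exact (abs_le.1 (hb _ hmem)).2
    rw [rearrCoord_eq, abs_le]
    exact ⟨le_csInf ⟨M, hMmem⟩ (fun y hy => Sset_lb (fun t ht => by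
        have hmem : Function.update x j t ∈ Box d := update_mem_box hx ⟨ht.1.le, ht.2⟩
        linarith [abs_le.1 (hb _ hmem)]) hxj y hy),
      csInf_le hbdd hMmem⟩

lemma foldr_bound_box {M : ℝ} (L : List (Fin d)) (g : (Fin d → ℝ) → ℝ)
    (hb : ∀ z ∈ Box d, |g z| ≤ M) :
    ∀ z ∈ Box d, |List.foldr (fun j g => rearrCoord j g) g L z| ≤ M := by
  induction L with
  | nil => exact hb
  | cons j L ih => exact abs_rearrCoord_le_box ih j

lemma foldr_le_box {M : ℝ} (L : List (Fin d)) (g₁ g₂ : (Fin d → ℝ) → ℝ)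
    (h12 : ∀ z ∈ Box d, g₁ z ≤ g₂ z)
    (hb1 : ∀ z ∈ Box d, |g₁ z| ≤ M) (hb2 : ∀ z ∈ Box d, |g₂ z| ≤ M) :
    ∀ x ∈ Box d, List.foldr (fun j g => rearrCoord j g) g₁ L x ≤
      List.foldr (fun j g => rearrCoord j g) g₂ L x := by
  induction L with
  | nil => exact h12
  | cons j L ih =>
      exact rearrCoord_le_rearrCoord_box ih
        (foldr_bound_box L g₁ hb1) (foldr_bound_box L g₂ hb2) j


/-! ### Pos versions (for monotone functions) -/

section Mono

variable {g : (Fin d → ℝ) → ℝ} {M : ℝ} {j : Fin d}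

lemma Sset_nonempty_pos (hmono : MonotoneOn g (Pos d)) (hb : ∀ z ∈ Pos d, |g z| ≤ M)
    {x : Fin d → ℝ} (hx : x ∈ Pos d) : M ∈ Sset j g x := by
  refine mem_Sset (hx j).1.le (hx j).2 fun t ht => ?_
  have hmem : Function.update x j t ∈ Pos d :=
    update_mem_pos hx ⟨ht.1, ht.2.trans (hx j).2⟩
  exact (abs_le.1 (hb _ hmem)).2

lemma Sset_bdd_pos (hb : ∀ z ∈ Pos d, |g z| ≤ M)
    {x : Fin d → ℝ} (hx : x ∈ Pos d) : ∀ y ∈ Sset j g x, -M ≤ y := by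
  refine Sset_lb (fun t ht => ?_) (hx j).1
  have hmem : Function.update x j t ∈ Pos d := update_mem_pos hx ht
  linarith [abs_le.1 (hb _ hmem)]

lemma rearrCoord_le_self_pos (hmono : MonotoneOn g (Pos d)) (hb : ∀ z ∈ Pos d, |g z| ≤ M)
    {x : Fin d → ℝ} (hx : x ∈ Pos d) : rearrCoord j g x ≤ g x := by
  rw [rearrCoord_eq]
  refine csInf_le ⟨-M, Sset_bdd_pos hb hx⟩ ?_
  refine mem_Sset (hx j).1.le (hx j).2 fun t ht => ?_
  have hmem : Function.update x j t ∈ Pos d :=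
    update_mem_pos hx ⟨ht.1, ht.2.trans (hx j).2⟩
  exact hmono hmem hx (update_le_self ht.2)

lemma update_le_rearrCoord_pos (hmono : MonotoneOn g (Pos d)) (hb : ∀ z ∈ Pos d, |g z| ≤ M)
    {x : Fin d → ℝ} (hx : x ∈ Pos d) {s : ℝ} (hs0 : 0 < s) (hsx : s < x j) :
    g (Function.update x j s) ≤ rearrCoord j g x := by
  rw [rearrCoord_eq]
  refine le_csInf ⟨M, Sset_nonempty_pos hmono hb hx⟩ ?_
  intro y hy
  have hexists : ∃ t, (t ∈ Set.Icc (0:ℝ) 1 ∩ {t : ℝ | g (Function.update x j t) ≤ y})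
      ∧ s < t := by
    by_contra hc
    push_neg at hc
    have hsub : Set.Icc (0:ℝ) 1 ∩ {t : ℝ | g (Function.update x j t) ≤ y}
        ⊆ Set.Icc 0 s := fun t ht => ⟨ht.1.1, hc t ht⟩
    have := toReal_le_of_subset hs0.le hsub
    have hy' : x j ≤ s := le_trans hy this
    linarith
  obtain ⟨t, ⟨ht, hEt⟩, hst⟩ := hexists
  have hmems : Function.update x j s ∈ Pos d :=
    update_mem_pos hx ⟨hs0, (hsx.le.trans (hx j).2)⟩
  have hmemt : Function.update x j t ∈ Pos d :=
    update_mem_pos hx ⟨hs0.trans hst, ht.2⟩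
  exact le_trans (hmono hmems hmemt (update_le_update hst.le)) hEt

lemma rearrCoord_monotoneOn_pos (hmono : MonotoneOn g (Pos d))
    (hb : ∀ z ∈ Pos d, |g z| ≤ M) :
    MonotoneOn (rearrCoord j g) (Pos d) := by
  intro x hx x' hx' hxx'
  rw [rearrCoord_eq, rearrCoord_eq]
  refine csInf_le_csInf ⟨-M, Sset_bdd_pos hb hx⟩
    ⟨M, Sset_nonempty_pos hmono hb hx'⟩ ?_
  intro y hy
  have hmeas : volume (Set.Icc (0:ℝ) 1 ∩ {t : ℝ | g (Function.update x' j t) ≤ y})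
      ≤ volume (Set.Icc (0:ℝ) 1 ∩ {t : ℝ | g (Function.update x j t) ≤ y}) := by
    have hsub : Set.Icc (0:ℝ) 1 ∩ {t : ℝ | g (Function.update x' j t) ≤ y}
        ⊆ {(0:ℝ)} ∪ (Set.Icc (0:ℝ) 1 ∩ {t : ℝ | g (Function.update x j t) ≤ y}) := by
      rintro t ⟨ht, hEt⟩
      rcases eq_or_lt_of_le ht.1 with rfl | hpos
      · exact Or.inl rfl
      · refine Or.inr ⟨ht, le_trans (hmono (update_mem_pos hx ⟨hpos, ht.2⟩)
          (update_mem_pos hx' ⟨hpos, ht.2⟩) ?_) hEt⟩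
        intro k
        rcases eq_or_ne k j with rfl | hk
        · simp
        · simpa [Function.update_of_ne hk] using hxx' k
    calc volume _ ≤ volume ({(0:ℝ)} ∪ (Set.Icc (0:ℝ) 1 ∩
            {t : ℝ | g (Function.update x j t) ≤ y})) := measure_mono hsub
      _ ≤ volume ({(0:ℝ)} : Set ℝ) + volume (Set.Icc (0:ℝ) 1 ∩
            {t : ℝ | g (Function.update x j t) ≤ y}) := measure_union_le _ _
      _ = _ := by simp
  show x j ≤ _
  calc x j ≤ x' j := hxx' j
    _ ≤ _ := hy
    _ ≤ _ := ENNReal.toReal_mono (vol_ne_top _) hmeas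

lemma abs_rearrCoord_le_pos (hmono : MonotoneOn g (Pos d)) (hb : ∀ z ∈ Pos d, |g z| ≤ M)
    {x : Fin d → ℝ} (hx : x ∈ Pos d) : |rearrCoord j g x| ≤ M := by
  rw [rearrCoord_eq, abs_le]
  constructor
  · exact le_csInf ⟨M, Sset_nonempty_pos hmono hb hx⟩ (Sset_bdd_pos hb hx)
  · exact csInf_le ⟨-M, Sset_bdd_pos hb hx⟩ (Sset_nonempty_pos hmono hb hx)

end Mono

/-- The main induction for the monotone case. -/
lemma foldr_key {f : (Fin d → ℝ) → ℝ} {M : ℝ}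
    (hf : MonotoneOn f (Box d)) (hb : ∀ z ∈ Box d, |f z| ≤ M) (L : List (Fin d)) :
    MonotoneOn (List.foldr (fun j g => rearrCoord j g) f L) (Pos d) ∧
    (∀ x ∈ Pos d, |List.foldr (fun j g => rearrCoord j g) f L x| ≤ M) ∧
    (∀ x ∈ Pos d, List.foldr (fun j g => rearrCoord j g) f L x ≤ f x) ∧
    (∀ x ∈ Pos d, ∀ x' ∈ Pos d, x' ≤ x → (∀ k ∈ L, x' k < x k) →
      f x' ≤ List.foldr (fun j g => rearrCoord j g) f L x) := by
  induction L with
  | nil =>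
      refine ⟨hf.mono pos_subset_box, fun x hx => hb x (pos_subset_box hx),
        fun x hx => le_refl _, fun x hx x' hx' hle _ =>
          hf (pos_subset_box hx') (pos_subset_box hx) hle⟩
  | cons j L ih =>
      obtain ⟨ih1, ih2, ih3, ih4⟩ := ih
      set F := List.foldr (fun j g => rearrCoord j g) f L with hF
      refine ⟨rearrCoord_monotoneOn_pos ih1 ih2,
        fun x hx => abs_rearrCoord_le_pos ih1 ih2 hx, ?_, ?_⟩
      · intro x hx
        exact le_trans (rearrCoord_le_self_pos ih1 ih2 hx) (ih3 x hx)
      · intro x hx x' hx' hle hstrict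
        have hj : x' j < x j := hstrict j List.mem_cons_self
        set s : ℝ := (x' j + x j) / 2 with hs
        have hs1 : x' j < s := by rw [hs]; linarith
        have hs2 : s < x j := by rw [hs]; linarith
        have hs0 : 0 < s := lt_trans (hx' j).1 hs1
        have hz : Function.update x j s ∈ Pos d :=
          update_mem_pos hx ⟨hs0, hs2.le.trans (hx j).2⟩
        refine le_trans ?_ (update_le_rearrCoord_pos ih1 ih2 hx hs0 hs2)
        refine ih4 _ hz x' hx' (le_update hle hs1.le) ?_
        intro k hk
        rcases eq_or_ne k j with rfl | hkj
        · simpa using hs1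
        · rw [Function.update_of_ne hkj]
          exact hstrict k (List.mem_cons_of_mem j hk)


/-! ### The a.e. argument -/

lemma vanish {v : ENNReal} {A : ℝ}
    (h : ∀ δ : ℝ, 0 < δ → δ < 1 → v ≤ ENNReal.ofReal ((1 - (1-δ)^d) * A)) : v = 0 := by
  have hcont : Continuous (fun t : ℝ => (1 - (1-t)^d) * A) := by continuity
  have h0 : Filter.Tendsto (fun m : ℕ => (1 : ℝ) / (m + 2)) Filter.atTop (nhds 0) := by
    have := tendsto_one_div_add_atTop_nhds_zero_nat (𝕜 := ℝ)
    have h2 := this.comp (Filter.tendsto_add_atTop_nat 1)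
    refine h2.congr fun m => ?_
    simp only [Function.comp]
    push_cast
    ring
  have h1 : Filter.Tendsto (fun m : ℕ => (1 - (1 - 1/(m+2 : ℝ))^d) * A)
      Filter.atTop (nhds 0) := by
    have := (hcont.tendsto' 0 0 (by simp)).comp h0
    simpa [Function.comp_def] using this
  have h2 : Filter.Tendsto (fun m : ℕ => ENNReal.ofReal ((1 - (1 - 1/(m+2 : ℝ))^d) * A))
      Filter.atTop (nhds 0) := by
    have := ENNReal.tendsto_ofReal h1
    simpa using this
  have hle : v ≤ 0 := ge_of_tendsto' h2 fun m => by
    refine h _ (by positivity) ?_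
    rw [div_lt_one (by positivity)]
    have : (0:ℝ) ≤ (m:ℝ) := Nat.cast_nonneg m
    linarith
  simpa using hle

lemma badn_bound {F f : (Fin d → ℝ) → ℝ} {M ε δ : ℝ} (hfm : Measurable f)
    (hf : MonotoneOn f (Box d)) (hb : ∀ z ∈ Box d, |f z| ≤ M)
    (hFge : ∀ x ∈ Pos d, ∀ x' ∈ Pos d, x' ≤ x → (∀ k, x' k < x k) → f x' ≤ F x)
    (hε : 0 < ε) (hδ0 : 0 < δ) (hδ1 : δ < 1) :
    volume {x | x ∈ Pos d ∧ ε < f x - F x} ≤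
      ENNReal.ofReal ((1 - (1-δ)^d) * (1 + 2*M/ε)) := by
  classical
  have hM0 : 0 ≤ M := by
    have h0 : (0 : Fin d → ℝ) ∈ Box d := mem_box_iff.2 fun k => by norm_num
    exact le_trans (abs_nonneg _) (hb _ h0)
  set K : ℝ := (1-δ)^d with hK
  have hK0 : 0 ≤ K := pow_nonneg (by linarith) d
  have hK1 : K ≤ 1 := pow_le_one₀ (by linarith) (by linarith)
  set c : Fin d → ℝ := fun _ => δ/2 with hc
  set S : Set (Fin d → ℝ) := Set.Icc (fun _ => δ) 1 with hSdef
  set T : Set (Fin d → ℝ) := Set.Icc (fun _ => δ/2) (fun _ => 1 - δ/2) with hTdef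
  have hSbox : S ⊆ Box d := Set.Icc_subset_Icc (fun k => by simpa using hδ0.le) le_rfl
  have hTbox : T ⊆ Box d := Set.Icc_subset_Icc (fun k => by positivity)
    (fun k => by simp; linarith)
  have hmeasS : MeasurableSet S := measurableSet_Icc
  have hmeasT : MeasurableSet T := measurableSet_Icc
  have hmeasBox : MeasurableSet (Box d) := measurableSet_Icc
  have hvolS : volume S = ENNReal.ofReal K := by
    rw [hSdef, Real.volume_Icc_pi]
    simp only [Pi.one_apply]
    rw [Finset.prod_const, ← ENNReal.ofReal_pow (by linarith)]
    simp [hK]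
  have hvolT : volume T = ENNReal.ofReal K := by
    calc volume T = ∏ _i : Fin d, ENNReal.ofReal (1 - δ) := by
          rw [hTdef, Real.volume_Icc_pi]
          exact Finset.prod_congr rfl fun i _ => by rw [show (1:ℝ) - δ/2 - δ/2 = 1 - δ by ring]
      _ = ENNReal.ofReal K := by
          rw [Finset.prod_const, ← ENNReal.ofReal_pow (by linarith)]
          simp [hK]
  have hvolBox : volume (Box d) = 1 := by
    rw [Box, Real.volume_Icc_pi]
    simp
  -- integrability
  have hIntf : IntegrableOn f (Box d) := by
    refine Integrable.mono' ((integrableOn_const_iff (C := M)).2 (Or.inr (by rw [hvolBox]; simp)))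
      hfm.aestronglyMeasurable.restrict ?_
    exact (ae_restrict_iff' hmeasBox).2 (Filter.Eventually.of_forall fun x hx => by
      simpa using hb x hx)
  have hmsub : Measurable fun x : Fin d → ℝ => x - c := measurable_id.sub measurable_const
  have hIntf' : IntegrableOn (fun x => f (x - c)) S := by
    refine Integrable.mono' ((integrableOn_const_iff (C := M)).2 (Or.inr (by rw [hvolS]; simp)))
      (hfm.comp hmsub).aestronglyMeasurable.restrict ?_
    refine (ae_restrict_iff' hmeasS).2 (Filter.Eventually.of_forall fun x hx => ?_)
    have hxmem : x - c ∈ Box d := by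
      rw [mem_box_iff]
      intro k
      obtain ⟨h1, h2⟩ := Set.mem_Icc.1 hx
      have := h1 k; have := h2 k
      simp only [Pi.sub_apply, hc] at *
      constructor <;> simp at * <;> linarith
    simpa using hb _ hxmem
  -- shift identity
  have hpre : (fun x : Fin d → ℝ => x - c) ⁻¹' T = S := by
    ext x
    simp only [Set.mem_preimage, hTdef, hSdef, Set.mem_Icc, Pi.le_def, Pi.sub_apply,
      Pi.one_apply, hc]
    constructor
    · rintro ⟨h1, h2⟩
      exact ⟨fun i => by linarith [h1 i], fun i => by linarith [h2 i]⟩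
    · rintro ⟨h1, h2⟩
      exact ⟨fun i => by linarith [h1 i], fun i => by linarith [h2 i]⟩
  have hshift : ∫ x in S, f (x - c) = ∫ x in T, f x := by
    have hmp : MeasurePreserving (fun x : Fin d → ℝ => x - c) volume volume :=
      measurePreserving_sub_right volume c
    have hemb : MeasurableEmbedding (fun x : Fin d → ℝ => x - c) :=
      (MeasurableEquiv.subRight c).measurableEmbedding
    have := hmp.setIntegral_preimage_emb hemb f T
    rwa [hpre] at this
  -- integral comparison
  have hISIT : (∫ x in S, f x) - ∫ x in T, f x ≤ 2*M*(1 - K) := by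
    have hInth : IntegrableOn (fun x => f x + M) (Box d) :=
      hIntf.add ((integrableOn_const_iff (C := M)).2 (Or.inr (by rw [hvolBox]; simp)))
    have e1 : ∫ x in S, (f x + M) = (∫ x in S, f x) + (volume S).toReal * M := by
      rw [integral_add (hIntf.mono_set hSbox)
        ((integrableOn_const_iff (C := M)).2 (Or.inr (by rw [hvolS]; simp)))]
      simp [setIntegral_const, smul_eq_mul, measureReal_def]
    have e2 : ∫ x in T, (f x + M) = (∫ x in T, f x) + (volume T).toReal * M := by
      rw [integral_add (hIntf.mono_set hTbox)
        ((integrableOn_const_iff (C := M)).2 (Or.inr (by rw [hvolT]; simp)))]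
      simp [setIntegral_const, smul_eq_mul, measureReal_def]
    have e3 : ∫ x in S, (f x + M) ≤ ∫ x in Box d, (f x + M) := by
      refine setIntegral_mono_set hInth ?_ (HasSubset.Subset.eventuallyLE hSbox)
      refine (ae_restrict_iff' hmeasBox).2 (Filter.Eventually.of_forall fun x hx => ?_)
      have := (abs_le.1 (hb x hx)).1
      simp only [Pi.zero_apply]
      linarith
    have e4 : (∫ x in Box d, (f x + M)) - ∫ x in T, (f x + M)
        = ∫ x in Box d \ T, (f x + M) := by
      rw [integral_diff hmeasT hInth hTbox]
    have e5 : ∫ x in Box d \ T, (f x + M) ≤ (volume (Box d \ T)).toReal * (2*M) := by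
      have := setIntegral_mono_on (hInth.mono_set Set.diff_subset)
        ((integrableOn_const_iff (C := 2*M)).2 (Or.inr (lt_of_le_of_lt (measure_mono Set.diff_subset)
          (by rw [hvolBox]; simp))))
        (hmeasBox.diff hmeasT) (fun x hx => ?_)
      · simpa [setIntegral_const, smul_eq_mul, measureReal_def] using this
      · have := (abs_le.1 (hb x hx.1)).2
        linarith
    have e6 : (volume (Box d \ T)).toReal = 1 - K := by
      rw [measure_diff hTbox hmeasT.nullMeasurableSet (by rw [hvolT]; simp),
        hvolBox, hvolT]
      rw [← ENNReal.ofReal_one, ← ENNReal.ofReal_sub _ hK0]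
      exact ENNReal.toReal_ofReal (by linarith)
    have hvolST : (volume S).toReal = (volume T).toReal := by rw [hvolS, hvolT]
    calc (∫ x in S, f x) - ∫ x in T, f x
        = (∫ x in S, (f x + M)) - ∫ x in T, (f x + M) := by rw [e1, e2, hvolST]; ring
      _ ≤ (∫ x in Box d, (f x + M)) - ∫ x in T, (f x + M) := by linarith
      _ = ∫ x in Box d \ T, (f x + M) := e4
      _ ≤ (volume (Box d \ T)).toReal * (2*M) := e5
      _ = 2*M*(1-K) := by rw [e6]; ring
  -- Markov for C
  set C : Set (Fin d → ℝ) := S ∩ {x | ε < f x - f (x - c)} with hCdef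
  have hmeasC : MeasurableSet C :=
    hmeasS.inter (measurableSet_lt measurable_const (hfm.sub (hfm.comp hmsub)))
  have hIntg : IntegrableOn (fun x => f x - f (x - c)) S :=
    (hIntf.mono_set hSbox).sub hIntf'
  have hg0 : 0 ≤ᵐ[volume.restrict S] fun x => f x - f (x - c) := by
    refine (ae_restrict_iff' hmeasS).2 (Filter.Eventually.of_forall fun x hx => ?_)
    have hx1 : x ∈ Box d := hSbox hx
    have hx2 : x - c ∈ Box d := by
      rw [mem_box_iff]
      intro k
      obtain ⟨h1, h2⟩ := Set.mem_Icc.1 hx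
      have h1k := h1 k; have h2k := h2 k
      simp only [Pi.one_apply] at h2k
      simp only [Pi.sub_apply, hc]
      constructor <;> [skip; skip] <;> simp at h1k ⊢ <;> linarith
    have : f (x - c) ≤ f x := hf hx2 hx1 (fun k => by simp [hc]; linarith)
    simp only [Pi.zero_apply]
    linarith
  have hmarkov : (volume C).toReal * ε ≤ (∫ x in S, f x) - ∫ x in T, f x := by
    have m1 : (volume C).toReal * ε = ∫ _ in C, ε := by
      rw [setIntegral_const, smul_eq_mul, measureReal_def]
    have m2 : (∫ _ in C, ε) ≤ ∫ x in C, (f x - f (x - c)) := by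
      refine setIntegral_mono_on
        ((integrableOn_const_iff (C := ε)).2 (Or.inr (lt_of_le_of_lt
          (measure_mono (Set.inter_subset_left.trans hSbox))
          (by rw [hvolBox]; simp))))
        (hIntg.mono_set Set.inter_subset_left) hmeasC (fun x hx => hx.2.le)
    have m3 : (∫ x in C, (f x - f (x - c))) ≤ ∫ x in S, (f x - f (x - c)) :=
      setIntegral_mono_set hIntg hg0 (HasSubset.Subset.eventuallyLE Set.inter_subset_left)
    have m4 : (∫ x in S, (f x - f (x - c))) = (∫ x in S, f x) - ∫ x in S, f (x - c) :=
      integral_sub (hIntf.mono_set hSbox) hIntf'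
    rw [m1, ← hshift]
    rw [m4] at m3
    linarith
  have hvolC : volume C ≤ ENNReal.ofReal ((1-K) * (2*M/ε)) := by
    have hCtop : volume C ≠ ⊤ := by
      refine ne_top_of_le_ne_top ?_ (measure_mono (Set.inter_subset_left.trans hSbox))
      rw [hvolBox]; simp
    have h1 : (volume C).toReal ≤ (1-K) * (2*M/ε) := by
      have h2 : (volume C).toReal * ε ≤ 2*M*(1-K) := le_trans hmarkov hISIT
      calc (volume C).toReal ≤ 2*M*(1-K)/ε := by
            rw [le_div_iff₀ hε]; exact h2
        _ = (1-K)*(2*M/ε) := by ring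
    calc volume C = ENNReal.ofReal (volume C).toReal := (ENNReal.ofReal_toReal hCtop).symm
      _ ≤ _ := ENNReal.ofReal_le_ofReal h1
  -- decomposition of the bad set
  have hbad : {x | x ∈ Pos d ∧ ε < f x - F x} ⊆ (Box d \ S) ∪ C := by
    rintro x ⟨hxP, hxε⟩
    by_cases hxS : x ∈ S
    · refine Or.inr ⟨hxS, ?_⟩
      have hxc : x - c ∈ Pos d := by
        intro k
        obtain ⟨h1, h2⟩ := Set.mem_Icc.1 hxS
        have h1k := h1 k
        simp only [Pi.sub_apply, hc]
        constructor
        · simp at h1k; linarith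
        · have := (hxP k).2; linarith
      have hle : x - c ≤ x := fun k => by simp [hc]; linarith
      have hstrict : ∀ k, (x - c) k < x k := fun k => by simp [hc]; linarith
      have := hFge x hxP _ hxc hle hstrict
      show ε < f x - f (x - c)
      linarith
    · exact Or.inl ⟨pos_subset_box hxP, hxS⟩
  have hvolBS : volume (Box d \ S) = ENNReal.ofReal (1 - K) := by
    rw [measure_diff hSbox hmeasS.nullMeasurableSet (by rw [hvolS]; simp), hvolBox, hvolS,
      ← ENNReal.ofReal_one, ← ENNReal.ofReal_sub _ hK0]
  calc volume {x | x ∈ Pos d ∧ ε < f x - F x} ≤ volume ((Box d \ S) ∪ C) :=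
      measure_mono hbad
    _ ≤ volume (Box d \ S) + volume C := measure_union_le _ _
    _ ≤ ENNReal.ofReal (1 - K) + ENNReal.ofReal ((1-K) * (2*M/ε)) := by
        rw [hvolBS]; exact add_le_add le_rfl hvolC
    _ = ENNReal.ofReal ((1 - K) * (1 + 2*M/ε)) := by
        rw [← ENNReal.ofReal_add (by linarith)
          (mul_nonneg (by linarith) (by positivity))]
        congr 1
        ring
    _ = _ := by rw [hK]


lemma ae_part {F f : (Fin d → ℝ) → ℝ} {M : ℝ} (hfm : Measurable f)
    (hf : MonotoneOn f (Box d)) (hb : ∀ z ∈ Box d, |f z| ≤ M)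
    (hFle : ∀ x ∈ Pos d, F x ≤ f x)
    (hFge : ∀ x ∈ Pos d, ∀ x' ∈ Pos d, x' ≤ x → (∀ k, x' k < x k) → f x' ≤ F x) :
    volume {x | x ∈ Box d ∧ F x ≠ f x} = 0 := by
  have hbadn : ∀ n : ℕ, volume {x | x ∈ Pos d ∧ 1/((n:ℝ)+1) < f x - F x} = 0 := by
    intro n
    refine vanish (d := d) (A := 1 + 2*M/(1/((n:ℝ)+1))) fun δ h0 h1 => ?_
    exact badn_bound hfm hf hb hFge (by positivity) h0 h1
  have hbound : volume (Box d \ Pos d) = 0 := by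
    refine measure_mono_null (fun x hx => ?_)
      (measure_iUnion_null (s := fun k : Fin d => {x : Fin d → ℝ | x k = 0}) fun k => ?_)
    · obtain ⟨hxB, hxP⟩ := hx
      rw [Set.mem_iUnion]
      simp only [Pos, Set.mem_setOf_eq, not_forall] at hxP
      obtain ⟨k, hk⟩ := hxP
      have hxk := (mem_box_iff.1 hxB) k
      push_neg at hk
      rcases lt_or_eq_of_le hxk.1 with h | h
      · exact absurd (hk h) (not_lt.2 hxk.2)
      · exact ⟨k, h.symm⟩
    · rw [MeasureTheory.volume_pi]
      exact Measure.pi_hyperplane (fun _ => volume) k 0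
  refine measure_mono_null ?_ (measure_union_null hbound (measure_iUnion_null hbadn))
  rintro x ⟨hxB, hne⟩
  by_cases hxP : x ∈ Pos d
  · right
    rw [Set.mem_iUnion]
    have hpos : 0 < f x - F x := sub_pos.2 (lt_of_le_of_ne (hFle x hxP) hne)
    obtain ⟨n, hn⟩ := exists_nat_one_div_lt hpos
    exact ⟨n, hxP, hn⟩
  · exact Or.inl ⟨hxB, hxP⟩

end RearrAux


open RearrAux

/-- Coverage preservation of rearranged confidence bands: if `ℓ ≤ f ≤ u`, then the
rearranged band covers the rearranged function; if moreover `f` is weakly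
increasing, it equals its rearrangement a.e., so the rearranged band covers `f`. -/
theorem rearranged_band_coverage {d : ℕ} (π : Equiv.Perm (Fin d))
    (l u f : (Fin d → ℝ) → ℝ)
    (hlm : Measurable l) (hum : Measurable u) (hfm : Measurable f)
    (hlb : ∃ M : ℝ, ∀ x ∈ Set.Icc (0 : Fin d → ℝ) 1, |l x| ≤ M)
    (hub : ∃ M : ℝ, ∀ x ∈ Set.Icc (0 : Fin d → ℝ) 1, |u x| ≤ M)
    (hfb : ∃ M : ℝ, ∀ x ∈ Set.Icc (0 : Fin d → ℝ) 1, |f x| ≤ M)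
    (hcov : ∀ x ∈ Set.Icc (0 : Fin d → ℝ) 1, l x ≤ f x ∧ f x ≤ u x) :
    (∀ x ∈ Set.Icc (0 : Fin d → ℝ) 1,
        rearrPerm π l x ≤ rearrPerm π f x ∧ rearrPerm π f x ≤ rearrPerm π u x) ∧
      (MonotoneOn f (Set.Icc (0 : Fin d → ℝ) 1) →
        ∀ᵐ x ∂(volume.restrict (Set.Icc (0 : Fin d → ℝ) 1)),
          rearrPerm π f x = f x) := by
  obtain ⟨Ml, hMl⟩ := hlb
  obtain ⟨Mu, hMu⟩ := hub
  obtain ⟨Mf, hMf⟩ := hfb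
  constructor
  · intro x hx
    constructor
    · refine foldr_le_box (M := max Ml Mf) (List.ofFn fun i => π i) l f
        (fun z hz => (hcov z hz).1)
        (fun z hz => le_trans (hMl z hz) (le_max_left _ _))
        (fun z hz => le_trans (hMf z hz) (le_max_right _ _)) x hx
    · refine foldr_le_box (M := max Mf Mu) (List.ofFn fun i => π i) f u
        (fun z hz => (hcov z hz).2)
        (fun z hz => le_trans (hMf z hz) (le_max_left _ _))
        (fun z hz => le_trans (hMu z hz) (le_max_right _ _)) x hx
  · intro hmono
    have key := foldr_key (f := f) (M := Mf) hmono hMf (List.ofFn fun i => π i)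
    have h0 : volume {x | x ∈ Box d ∧ rearrPerm π f x ≠ f x} = 0 := by
      refine ae_part hfm hmono hMf (fun x hx => key.2.2.1 x hx) ?_
      intro x hx x' hx' hle hstrict
      exact key.2.2.2 x hx x' hx' hle (fun k _ => hstrict k)
    rw [ae_iff, Measure.restrict_apply' measurableSet_Icc]
    refine measure_mono_null (fun x hx => ?_) h0
    exact ⟨hx.2, hx.1⟩
end

section
/- (Length reduction of rearranged confidence bands.) Let ℓ, u : [0,1] → K be bounded measurable with ℓ ≤ u, and let ℓ*, u* be their increasing rearrangements. Then for every p ∈ [1,∞), (∫₀¹ |u*(x) − ℓ*(x)|^p dx)^{1/p} ≤ (∫₀¹ |u(x) − ℓ(x)|^p dx)^{1/p}. -/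
open MeasureTheory Set
open scoped ENNReal

/-- Increasing rearrangement of a function on [0,1]. -/
noncomputable def rearr (f : ℝ → ℝ) (x : ℝ) : ℝ :=
  sInf {y : ℝ | x ≤ (volume (Set.Icc (0:ℝ) 1 ∩ {u : ℝ | f u ≤ y})).toReal}

namespace RearrangedBand

noncomputable def mf (f : ℝ → ℝ) (y : ℝ) : ℝ≥0∞ := volume (Icc (0:ℝ) 1 ∩ {x | f x ≤ y})

lemma rearr_def (f : ℝ → ℝ) (x : ℝ) :
    rearr f x = sInf {y : ℝ | x ≤ (mf f y).toReal} := rfl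

lemma mf_le_one (f : ℝ → ℝ) (y : ℝ) : mf f y ≤ 1 := by
  rw [mf]
  refine le_trans (measure_mono inter_subset_left) ?_
  simp [Real.volume_Icc]

lemma mf_ne_top (f : ℝ → ℝ) (y : ℝ) : mf f y ≠ ⊤ :=
  ((mf_le_one f y).trans_lt ENNReal.one_lt_top).ne

lemma mf_toReal_le_one (f : ℝ → ℝ) (y : ℝ) : (mf f y).toReal ≤ 1 := by
  have := ENNReal.toReal_mono (by simp) (mf_le_one f y)
  simpa using this

lemma mf_mono (f : ℝ → ℝ) : Monotone (mf f) := fun y z h =>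
  measure_mono (inter_subset_inter_right _ fun x hx => le_trans hx h)

section bounds

variable {C : ℝ} {f : ℝ → ℝ}

lemma mf_eq_one (hb : ∀ x ∈ Icc (0:ℝ) 1, |f x| ≤ C) {y : ℝ} (hy : C ≤ y) : mf f y = 1 := by
  have h : Icc (0:ℝ) 1 ∩ {x | f x ≤ y} = Icc (0:ℝ) 1 :=
    inter_eq_left.mpr fun x hx => le_trans (le_trans (le_abs_self _) (hb x hx)) hy
  rw [mf, h]; simp [Real.volume_Icc]

lemma neg_le_of_mem (hb : ∀ x ∈ Icc (0:ℝ) 1, |f x| ≤ C) {x y : ℝ} (hx : 0 < x)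
    (hy : x ≤ (mf f y).toReal) : -C ≤ y := by
  by_contra h
  push_neg at h
  have hempty : Icc (0:ℝ) 1 ∩ {z | f z ≤ y} = ∅ := by
    ext z
    simp only [mem_inter_iff, mem_setOf_eq, mem_empty_iff_false, iff_false, not_and]
    intro hz hz2
    have := (abs_le.mp (hb z hz)).1
    linarith
  rw [mf, hempty] at hy
  simp at hy
  linarith

lemma bddBelow_S (hb : ∀ x ∈ Icc (0:ℝ) 1, |f x| ≤ C) {x : ℝ} (hx : 0 < x) :
    BddBelow {y | x ≤ (mf f y).toReal} :=
  ⟨-C, fun _ hy => neg_le_of_mem hb hx hy⟩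

lemma C_mem_S (hb : ∀ x ∈ Icc (0:ℝ) 1, |f x| ≤ C) {x : ℝ} (hx : x ≤ 1) :
    C ∈ {y | x ≤ (mf f y).toReal} := by
  rw [mem_setOf_eq, mf_eq_one hb le_rfl]
  simpa using hx

lemma le_mf_of_forall (hf : Measurable f) {x y : ℝ}
    (h : ∀ ε > 0, x ≤ (mf f (y + ε)).toReal) : x ≤ (mf f y).toReal := by
  rcases le_or_gt x 0 with hx | hx
  · exact hx.trans ENNReal.toReal_nonneg
  have hset : Icc (0:ℝ) 1 ∩ {z | f z ≤ y}
      = ⋂ n : ℕ, (Icc (0:ℝ) 1 ∩ {z | f z ≤ y + 1/(n+1)}) := by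
    ext z
    simp only [mem_iInter, mem_inter_iff, mem_setOf_eq]
    constructor
    · rintro ⟨h1, h2⟩ n
      have hpos : (0:ℝ) < 1/(n+1) := by positivity
      exact ⟨h1, by linarith⟩
    · intro hall
      refine ⟨(hall 0).1, ?_⟩
      by_contra hc
      push_neg at hc
      obtain ⟨n, hn⟩ := exists_nat_one_div_lt (sub_pos.mpr hc)
      have := (hall n).2
      linarith
  have hmeas : ∀ n : ℕ, NullMeasurableSet (Icc (0:ℝ) 1 ∩ {z | f z ≤ y + 1/(n+1)}) volume :=
    fun n => (measurableSet_Icc.inter (hf measurableSet_Iic)).nullMeasurableSet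
  have hanti : Antitone (fun n : ℕ => Icc (0:ℝ) 1 ∩ {z | f z ≤ y + 1/(n+1)}) := by
    intro m n hmn
    refine inter_subset_inter_right _ fun z hz => ?_
    have h1 : (1:ℝ)/(n+1) ≤ 1/(m+1) := by
      apply one_div_le_one_div_of_le
      · positivity
      · exact_mod_cast by exact_mod_cast add_le_add (Nat.cast_le.mpr hmn) (le_refl (1:ℝ))
    simp only [mem_setOf_eq] at hz ⊢
    linarith
  have key : mf f y = ⨅ n : ℕ, mf f (y + 1/(n+1)) := by
    rw [mf, hset]
    exact hanti.measure_iInter hmeas ⟨0, mf_ne_top f _⟩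
  have hge : ENNReal.ofReal x ≤ ⨅ n : ℕ, mf f (y + 1/(n+1)) :=
    le_iInf fun n => ENNReal.ofReal_le_of_le_toReal (h _ (by positivity))
  rw [key]
  calc x = (ENNReal.ofReal x).toReal := (ENNReal.toReal_ofReal hx.le).symm
  _ ≤ _ := ENNReal.toReal_mono (by
      exact ne_top_of_le_ne_top (mf_ne_top f (y + 1/((0:ℕ)+1)))
        (iInf_le (fun n : ℕ => mf f (y + 1/(n+1))) 0)) hge

lemma rearr_le_iff (hf : Measurable f) (hb : ∀ x ∈ Icc (0:ℝ) 1, |f x| ≤ C)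
    {x y : ℝ} (hx : x ∈ Ioc (0:ℝ) 1) :
    rearr f x ≤ y ↔ x ≤ (mf f y).toReal := by
  rw [rearr_def]
  constructor
  · intro h
    apply le_mf_of_forall hf
    intro ε hε
    have hne : {y' | x ≤ (mf f y').toReal}.Nonempty := ⟨C, C_mem_S hb hx.2⟩
    have hlt : sInf {y' | x ≤ (mf f y').toReal} < y + ε := lt_of_le_of_lt h (by linarith)
    obtain ⟨z, hz, hzlt⟩ := exists_lt_of_csInf_lt hne hlt
    exact le_trans hz (ENNReal.toReal_mono (mf_ne_top f _) (mf_mono f hzlt.le))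
  · intro h
    exact csInf_le (bddBelow_S hb hx.1) h

lemma rearr_mem (hb : ∀ x ∈ Icc (0:ℝ) 1, |f x| ≤ C) {x : ℝ} (hx : x ∈ Ioc (0:ℝ) 1) :
    rearr f x ∈ Icc (-C) C := by
  constructor
  · rw [rearr_def]
    exact le_csInf ⟨C, C_mem_S hb hx.2⟩ fun y hy => neg_le_of_mem hb hx.1 hy
  · rw [rearr_def]
    exact csInf_le (bddBelow_S hb hx.1) (C_mem_S hb hx.2)

end bounds

/-- Monotone extension of `rearr f` beyond `(0,1]`. -/
noncomputable def cl (C : ℝ) (f : ℝ → ℝ) (x : ℝ) : ℝ :=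
  if x ≤ 0 then -(C+1) else rearr f (min x 1)

section clamp

variable {C : ℝ} {f : ℝ → ℝ}

lemma cl_eq {x : ℝ} (hx : x ∈ Ioc (0:ℝ) 1) : cl C f x = rearr f x := by
  rw [cl, if_neg (not_le.mpr hx.1), min_eq_left hx.2]

lemma rearr_mono_on (hb : ∀ x ∈ Icc (0:ℝ) 1, |f x| ≤ C) {x y : ℝ}
    (hx : x ∈ Ioc (0:ℝ) 1) (hy : y ∈ Ioc (0:ℝ) 1) (hxy : x ≤ y) :
    rearr f x ≤ rearr f y := by
  rw [rearr_def, rearr_def]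
  exact csInf_le_csInf (bddBelow_S hb hx.1) ⟨C, C_mem_S hb hy.2⟩
    (fun z hz => le_trans hxy hz)

lemma cl_mono (hb : ∀ x ∈ Icc (0:ℝ) 1, |f x| ≤ C) : Monotone (cl C f) := by
  intro x y hxy
  by_cases hx : x ≤ 0
  · by_cases hy : y ≤ 0
    · simp [cl, hx, hy]
    · rw [cl, if_pos hx, cl, if_neg hy]
      push_neg at hy
      have hmem : min y 1 ∈ Ioc (0:ℝ) 1 := ⟨lt_min hy one_pos, min_le_right _ _⟩
      have := (rearr_mem hb hmem).1
      linarith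
  · have hy : ¬ y ≤ 0 := fun h => hx (hxy.trans h)
    rw [cl, if_neg hx, cl, if_neg hy]
    push_neg at hx hy
    exact rearr_mono_on hb ⟨lt_min hx one_pos, min_le_right _ _⟩
      ⟨lt_min hy one_pos, min_le_right _ _⟩ (min_le_min hxy le_rfl)

lemma cl_measurable (hb : ∀ x ∈ Icc (0:ℝ) 1, |f x| ≤ C) : Measurable (cl C f) :=
  (cl_mono hb).measurable

lemma set_cl_le (hf : Measurable f) (hb : ∀ x ∈ Icc (0:ℝ) 1, |f x| ≤ C) (s : ℝ) :
    {x | cl C f x ≤ s} ∩ Ioc (0:ℝ) 1 = Ioc 0 ((mf f s).toReal) := by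
  ext x
  simp only [mem_inter_iff, mem_setOf_eq, mem_Ioc]
  constructor
  · rintro ⟨h1, h2⟩
    rw [cl_eq h2] at h1
    exact ⟨h2.1, (rearr_le_iff hf hb h2).mp h1⟩
  · rintro ⟨h1, h2⟩
    have hxm : x ∈ Ioc (0:ℝ) 1 := ⟨h1, le_trans h2 (mf_toReal_le_one f s)⟩
    exact ⟨by rw [cl_eq hxm]; exact (rearr_le_iff hf hb hxm).mpr h2, hxm⟩

lemma set_cl_gt (hf : Measurable f) (hb : ∀ x ∈ Icc (0:ℝ) 1, |f x| ≤ C) (t : ℝ) :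
    {x | t < cl C f x} ∩ Ioc (0:ℝ) 1 = Ioc ((mf f t).toReal) 1 := by
  ext x
  simp only [mem_inter_iff, mem_setOf_eq, mem_Ioc]
  constructor
  · rintro ⟨h1, h2⟩
    rw [cl_eq h2] at h1
    refine ⟨?_, h2.2⟩
    by_contra hc
    push_neg at hc
    have := (rearr_le_iff hf hb h2).mpr hc
    linarith
  · rintro ⟨h1, h2⟩
    have hxm : x ∈ Ioc (0:ℝ) 1 := ⟨lt_of_le_of_lt ENNReal.toReal_nonneg h1, h2⟩
    refine ⟨?_, hxm⟩
    rw [cl_eq hxm]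
    by_contra hc
    push_neg at hc
    have := (rearr_le_iff hf hb hxm).mp hc
    linarith

end clamp

lemma vol_inter_Ioc (D : Set ℝ) :
    volume (D ∩ Ioc (0:ℝ) 1) = volume (D ∩ Icc (0:ℝ) 1) :=
  measure_congr ((Filter.EventuallyEq.refl _ _).inter Ioc_ae_eq_Icc)

section core

variable {C : ℝ} {l u : ℝ → ℝ}

lemma core_compare (hlm : Measurable l) (hum : Measurable u)
    (hbl : ∀ x ∈ Icc (0:ℝ) 1, |l x| ≤ C) (hbu : ∀ x ∈ Icc (0:ℝ) 1, |u x| ≤ C)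
    (s t : ℝ) :
    volume ({x | cl C l x ≤ s ∧ t < cl C u x} ∩ Ioc (0:ℝ) 1)
      ≤ volume ({x | l x ≤ s ∧ t < u x} ∩ Ioc (0:ℝ) 1) := by
  set a := (mf l s).toReal with ha
  set b := (mf u t).toReal with hbb
  have hsub : {x | cl C l x ≤ s ∧ t < cl C u x} ∩ Ioc (0:ℝ) 1 ⊆ Ioc b a := by
    intro x hx
    have h1 : x ∈ {x | cl C l x ≤ s} ∩ Ioc (0:ℝ) 1 := ⟨hx.1.1, hx.2⟩
    have h2 : x ∈ {x | t < cl C u x} ∩ Ioc (0:ℝ) 1 := ⟨hx.1.2, hx.2⟩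
    rw [set_cl_le hlm hbl s] at h1
    rw [set_cl_gt hum hbu t] at h2
    exact ⟨h2.1, h1.2⟩
  refine le_trans (measure_mono hsub) ?_
  rw [Real.volume_Ioc]
  have key : mf l s ≤ volume ({x | l x ≤ s ∧ t < u x} ∩ Icc (0:ℝ) 1) + mf u t := by
    rw [mf]
    refine le_trans (measure_mono ?_) (measure_union_le _ _)
    rintro x ⟨hx1, hx2⟩
    by_cases hu : u x ≤ t
    · exact Or.inr ⟨hx1, hu⟩
    · exact Or.inl ⟨⟨hx2, not_le.mp hu⟩, hx1⟩
  have h1 : ENNReal.ofReal (a - b) = mf l s - mf u t := by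
    rw [ha, hbb, ENNReal.ofReal_sub _ ENNReal.toReal_nonneg,
      ENNReal.ofReal_toReal (mf_ne_top l s), ENNReal.ofReal_toReal (mf_ne_top u t)]
  rw [h1, vol_inter_Ioc]
  exact tsub_le_iff_right.mpr key

end core

end RearrangedBand
namespace RearrangedBand

noncomputable def kern (p : ℝ) (q : ℝ × ℝ) : ℝ≥0∞ :=
  if q.1 < q.2 then ENNReal.ofReal (p * (p-1) * (q.2 - q.1) ^ (p-2)) else 0

lemma kern_measurable (p : ℝ) : Measurable (kern p) := by
  apply Measurable.ite (measurableSet_lt measurable_fst measurable_snd) _ measurable_const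
  apply ENNReal.measurable_ofReal.comp
  apply Measurable.const_mul
  exact (measurable_snd.sub measurable_fst).pow measurable_const

lemma rep_one (a b : ℝ) :
    ∫⁻ q, (if a ≤ q.1 ∧ q.2 < b then (1:ℝ≥0∞) else 0)
        ∂(Measure.map (fun s : ℝ => (s, s)) volume)
      = ENNReal.ofReal ((b - a) ^ (1:ℝ)) := by
  rw [lintegral_map ?_ (show Measurable fun s : ℝ => (s, s) from measurable_id.prodMk measurable_id)]
  · have h : (fun s : ℝ => if a ≤ s ∧ s < b then (1:ℝ≥0∞) else 0)
        = (Ico a b).indicator (fun _ => 1) := by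
      funext s
      simp [indicator_apply, mem_Ico]
    rw [h, lintegral_indicator_const measurableSet_Ico, Real.volume_Ico, one_mul,
      Real.rpow_one]
  · exact Measurable.ite
      ((measurableSet_le measurable_const measurable_fst).inter
        (measurableSet_lt measurable_snd measurable_const))
      measurable_const measurable_const

lemma rep_gt {p : ℝ} (hp1 : 1 < p) (a b : ℝ) (hab : a ≤ b) :
    ∫⁻ q, (if a ≤ q.1 ∧ q.2 < b then kern p q else 0) ∂((volume : Measure ℝ).prod volume)
      = ENNReal.ofReal ((b - a) ^ p) := by
  have hp1' : (0:ℝ) < p - 1 := by linarith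
  have hFm : Measurable (fun q : ℝ × ℝ => if a ≤ q.1 ∧ q.2 < b then kern p q else 0) :=
    Measurable.ite
      ((measurableSet_le measurable_const measurable_fst).inter
        (measurableSet_lt measurable_snd measurable_const))
      (kern_measurable p) measurable_const
  rw [MeasureTheory.lintegral_prod _ hFm.aemeasurable]
  have inner : ∀ s : ℝ, ∫⁻ t, (if a ≤ s ∧ t < b then kern p (s, t) else 0)
      = (Ico a b).indicator (fun s => ENNReal.ofReal (p * (b - s) ^ (p-1))) s := by
    intro s
    by_cases hs : s ∈ Ico a b
    · rw [indicator_of_mem hs]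
      have hfun : (fun t => if a ≤ s ∧ t < b then kern p (s, t) else 0)
          = (Ioo s b).indicator (fun t => ENNReal.ofReal (p * (p-1) * (t - s) ^ (p-2))) := by
        funext t
        by_cases ht : t ∈ Ioo s b
        · rw [indicator_of_mem ht, if_pos ⟨hs.1, ht.2⟩, kern, if_pos ht.1]
        · rw [indicator_of_notMem ht]
          by_cases h2 : a ≤ s ∧ t < b
          · rw [if_pos h2, kern, if_neg (fun hlt => ht ⟨hlt, h2.2⟩)]
          · rw [if_neg h2]
      rw [hfun, lintegral_indicator measurableSet_Ioo]
      have hsb : s < b := hs.2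
      have hII : IntervalIntegrable (fun t : ℝ => (t - s) ^ (p-2)) volume s b := by
        have h0 := intervalIntegral.intervalIntegrable_rpow'
          (a := s - s) (b := b - s) (r := p - 2) (by linarith)
        have h1 := h0.comp_sub_right s
        simpa using h1
      have hint : IntegrableOn (fun t : ℝ => p * (p-1) * (t - s) ^ (p-2)) (Ioo s b) volume := by
        have h2 := (hII.const_mul (p * (p-1)))
        rw [intervalIntegrable_iff_integrableOn_Ioo_of_le hsb.le] at h2
        exact h2
      have hnn : 0 ≤ᵐ[volume.restrict (Ioo s b)]
          (fun t : ℝ => p * (p-1) * (t - s) ^ (p-2)) := by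
        refine (ae_restrict_iff' measurableSet_Ioo).mpr (ae_of_all _ fun t ht => ?_)
        have h3 : (0:ℝ) ≤ (t - s) ^ (p-2) := Real.rpow_nonneg (by linarith [ht.1]) _
        have h4 : (0:ℝ) ≤ p * (p-1) := by nlinarith
        exact mul_nonneg h4 h3
      rw [← ofReal_integral_eq_lintegral_ofReal hint hnn]
      congr 1
      rw [← integral_Ioc_eq_integral_Ioo, ← intervalIntegral.integral_of_le hsb.le]
      rw [intervalIntegral.integral_const_mul]
      rw [show (fun t : ℝ => (t - s) ^ (p-2)) = fun t : ℝ => (fun x : ℝ => x ^ (p-2)) (t - s) from rfl]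
      rw [intervalIntegral.integral_comp_sub_right (fun x : ℝ => x ^ (p-2)) s]
      rw [integral_rpow (Or.inl (by linarith : (-1:ℝ) < p - 2))]
      have : p - 2 + 1 = p - 1 := by ring
      rw [this, sub_self, Real.zero_rpow (by linarith : p - 1 ≠ 0)]
      field_simp
      ring
    · rw [indicator_of_notMem hs]
      have hfun : (fun t => if a ≤ s ∧ t < b then kern p (s, t) else 0) = fun _ => (0:ℝ≥0∞) := by
        funext t
        by_cases h2 : a ≤ s ∧ t < b
        · rw [mem_Ico] at hs
          push_neg at hs
          rw [if_pos h2, kern, if_neg (by simp only [not_lt]; linarith [hs h2.1, h2.2])]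
        · rw [if_neg h2]
      rw [hfun, lintegral_zero]
  rw [lintegral_congr inner, lintegral_indicator measurableSet_Ico]
  have hII2 : IntervalIntegrable (fun s : ℝ => (b - s) ^ (p-1)) volume a b := by
    have h0 := intervalIntegral.intervalIntegrable_rpow'
      (a := b - b) (b := b - a) (r := p - 1) (by linarith)
    have h1 := (h0.comp_sub_left b).symm
    simpa using h1
  have hint2 : IntegrableOn (fun s : ℝ => p * (b - s) ^ (p-1)) (Ico a b) volume := by
    have h2 := hII2.const_mul p
    rw [intervalIntegrable_iff_integrableOn_Ioo_of_le hab] at h2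
    rw [integrableOn_Ico_iff_integrableOn_Ioo]
    exact h2
  have hnn2 : 0 ≤ᵐ[volume.restrict (Ico a b)] (fun s : ℝ => p * (b - s) ^ (p-1)) := by
    refine (ae_restrict_iff' measurableSet_Ico).mpr (ae_of_all _ fun s hs => ?_)
    have h3 : (0:ℝ) ≤ (b - s) ^ (p-1) := Real.rpow_nonneg (by linarith [hs.2]) _
    exact mul_nonneg (by linarith) h3
  rw [← ofReal_integral_eq_lintegral_ofReal hint2 hnn2]
  congr 1
  rw [integral_Ico_eq_integral_Ioo, ← integral_Ioc_eq_integral_Ioo,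
    ← intervalIntegral.integral_of_le hab]
  rw [intervalIntegral.integral_const_mul]
  rw [show (fun s : ℝ => (b - s) ^ (p-1)) = fun s : ℝ => (fun x : ℝ => x ^ (p-1)) (b - s) from rfl]
  rw [intervalIntegral.integral_comp_sub_left (fun x : ℝ => x ^ (p-1)) b]
  rw [integral_rpow (Or.inl (by linarith : (-1:ℝ) < p - 1))]
  have : p - 1 + 1 = p := by ring
  rw [this, sub_self, Real.zero_rpow (by linarith : p ≠ 0)]
  field_simp
  rw [sub_zero]

end RearrangedBand
namespace RearrangedBand

section chain

variable {p : ℝ}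

lemma chain (ν : Measure (ℝ × ℝ)) [SFinite ν] (k : ℝ × ℝ → ℝ≥0∞) (hk : Measurable k)
    (hrep : ∀ a b : ℝ, a ≤ b →
      ∫⁻ q, (if a ≤ q.1 ∧ q.2 < b then k q else 0) ∂ν = ENNReal.ofReal ((b - a) ^ p))
    (f g : ℝ → ℝ) (hfm : Measurable f) (hgm : Measurable g)
    (hfg : ∀ x ∈ Ioc (0:ℝ) 1, f x ≤ g x) :
    ∫⁻ x in Ioc (0:ℝ) 1, ENNReal.ofReal ((g x - f x) ^ p)
      = ∫⁻ q, k q * volume ({x | f x ≤ q.1 ∧ q.2 < g x} ∩ Ioc (0:ℝ) 1) ∂ν := by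
  have h1 : ∫⁻ x in Ioc (0:ℝ) 1, ENNReal.ofReal ((g x - f x) ^ p)
      = ∫⁻ x in Ioc (0:ℝ) 1, ∫⁻ q, (if f x ≤ q.1 ∧ q.2 < g x then k q else 0) ∂ν := by
    refine setLIntegral_congr_fun measurableSet_Ioc (fun x hx => ?_)
    exact (hrep _ _ (hfg x hx)).symm
  have hmeas : AEMeasurable
      (Function.uncurry fun (x : ℝ) (q : ℝ × ℝ) => if f x ≤ q.1 ∧ q.2 < g x then k q else 0)
      ((volume.restrict (Ioc (0:ℝ) 1)).prod ν) := by
    apply Measurable.aemeasurable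
    have hset : MeasurableSet {z : ℝ × (ℝ × ℝ) | f z.1 ≤ z.2.1 ∧ z.2.2 < g z.1} := by
      rw [setOf_and]
      exact (measurableSet_le (hfm.comp measurable_fst) (measurable_fst.comp measurable_snd)).inter
        (measurableSet_lt (measurable_snd.comp measurable_snd) (hgm.comp measurable_fst))
    exact Measurable.ite hset (hk.comp measurable_snd) measurable_const
  rw [h1, lintegral_lintegral_swap hmeas]
  refine lintegral_congr fun q => ?_
  have hsm : MeasurableSet {x : ℝ | f x ≤ q.1 ∧ q.2 < g x} := by
    rw [setOf_and]
    exact (measurableSet_le hfm measurable_const).inter (measurableSet_lt measurable_const hgm)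
  have h2 : ∫⁻ x in Ioc (0:ℝ) 1, (if f x ≤ q.1 ∧ q.2 < g x then k q else 0)
      = ∫⁻ x in Ioc (0:ℝ) 1, ({x : ℝ | f x ≤ q.1 ∧ q.2 < g x}).indicator (fun _ => k q) x :=
    lintegral_congr fun x => by simp [indicator_apply]
  rw [h2, lintegral_indicator_const hsm, Measure.restrict_apply hsm]

variable {C : ℝ} {l u : ℝ → ℝ}

lemma cl_le_cl (hbl : ∀ x ∈ Icc (0:ℝ) 1, |l x| ≤ C) (hbu : ∀ x ∈ Icc (0:ℝ) 1, |u x| ≤ C)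
    (hle : ∀ x ∈ Icc (0:ℝ) 1, l x ≤ u x) :
    ∀ x ∈ Ioc (0:ℝ) 1, cl C l x ≤ cl C u x := by
  intro x hx
  rw [cl_eq hx, cl_eq hx, rearr_def, rearr_def]
  refine csInf_le_csInf (bddBelow_S hbl hx.1) ⟨C, C_mem_S hbu hx.2⟩ fun z hz => ?_
  refine le_trans hz (ENNReal.toReal_mono (mf_ne_top l z) (measure_mono ?_))
  rintro w ⟨hw1, hw2⟩
  exact ⟨hw1, le_trans (hle w hw1) hw2⟩

lemma main_ineq (ν : Measure (ℝ × ℝ)) [SFinite ν] (k : ℝ × ℝ → ℝ≥0∞) (hk : Measurable k)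
    (hrep : ∀ a b : ℝ, a ≤ b →
      ∫⁻ q, (if a ≤ q.1 ∧ q.2 < b then k q else 0) ∂ν = ENNReal.ofReal ((b - a) ^ p))
    (hlm : Measurable l) (hum : Measurable u)
    (hbl : ∀ x ∈ Icc (0:ℝ) 1, |l x| ≤ C) (hbu : ∀ x ∈ Icc (0:ℝ) 1, |u x| ≤ C)
    (hle : ∀ x ∈ Icc (0:ℝ) 1, l x ≤ u x) :
    ∫⁻ x in Ioc (0:ℝ) 1, ENNReal.ofReal ((cl C u x - cl C l x) ^ p)
      ≤ ∫⁻ x in Ioc (0:ℝ) 1, ENNReal.ofReal ((u x - l x) ^ p) := by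
  rw [chain ν k hk hrep (cl C l) (cl C u) (cl_measurable hbl) (cl_measurable hbu)
      (cl_le_cl hbl hbu hle),
    chain ν k hk hrep l u hlm hum (fun x hx => hle x (Ioc_subset_Icc_self hx))]
  exact lintegral_mono fun q =>
    mul_le_mul_right (core_compare hlm hum hbl hbu q.1 q.2) _

end chain

end RearrangedBand
/-- Length reduction of rearranged confidence bands, for every `p ∈ [1,∞)`. -/
theorem rearranged_band_shorter (K : Set ℝ) (hK : Bornology.IsBounded K)
    (l u : ℝ → ℝ) (hlm : Measurable l) (hum : Measurable u)
    (hlK : ∀ x ∈ Set.Icc (0:ℝ) 1, l x ∈ K)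
    (huK : ∀ x ∈ Set.Icc (0:ℝ) 1, u x ∈ K)
    (hle : ∀ x ∈ Set.Icc (0:ℝ) 1, l x ≤ u x)
    (p : ℝ) (hp : 1 ≤ p) :
    (∫ x in Set.Icc (0:ℝ) 1, |rearr u x - rearr l x| ^ p) ^ (1 / p) ≤
      (∫ x in Set.Icc (0:ℝ) 1, |u x - l x| ^ p) ^ (1 / p) := by
  classical
  open RearrangedBand in
  obtain ⟨r, hr⟩ := (Metric.isBounded_iff_subset_closedBall 0).mp hK
  set C : ℝ := max r 0 with hCdef
  have hC : 0 ≤ C := le_max_right _ _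
  have habs : ∀ y ∈ K, |y| ≤ C := by
    intro y hy
    have := hr hy
    rw [Metric.mem_closedBall, Real.dist_eq, sub_zero] at this
    exact this.trans (le_max_left _ _)
  have hbl : ∀ x ∈ Icc (0:ℝ) 1, |l x| ≤ C := fun x hx => habs _ (hlK x hx)
  have hbu : ∀ x ∈ Icc (0:ℝ) 1, |u x| ≤ C := fun x hx => habs _ (huK x hx)
  have hcle := cl_le_cl hbl hbu hle
  -- key lintegral inequality
  have key : ∫⁻ x in Ioc (0:ℝ) 1, ENNReal.ofReal ((cl C u x - cl C l x) ^ p)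
      ≤ ∫⁻ x in Ioc (0:ℝ) 1, ENNReal.ofReal ((u x - l x) ^ p) := by
    rcases eq_or_lt_of_le hp with hp1 | hp1
    · refine main_ineq (Measure.map (fun s : ℝ => (s, s)) volume) (fun _ => 1)
        measurable_const (fun a b hab => ?_) hlm hum hbl hbu hle
      rw [rep_one a b, ← hp1]
    · exact main_ineq ((volume : Measure ℝ).prod volume) (kern p) (kern_measurable p)
        (fun a b hab => rep_gt hp1 a b hab) hlm hum hbl hbu hle
  -- finiteness of the right-hand side
  have hfin : ∫⁻ x in Ioc (0:ℝ) 1, ENNReal.ofReal ((u x - l x) ^ p) ≠ ⊤ := by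
    have hbd : ∫⁻ x in Ioc (0:ℝ) 1, ENNReal.ofReal ((u x - l x) ^ p)
        ≤ ∫⁻ _ in Ioc (0:ℝ) 1, ENNReal.ofReal ((2 * C) ^ p) := by
      refine lintegral_mono_ae ((ae_restrict_iff' measurableSet_Ioc).mpr
        (ae_of_all _ fun x hx => ?_))
      have hx' := Ioc_subset_Icc_self hx
      have h1 : u x - l x ≤ 2 * C := by
        have := abs_le.mp (hbl x hx'); have := abs_le.mp (hbu x hx'); cases this; linarith
      exact ENNReal.ofReal_le_ofReal
        (Real.rpow_le_rpow (sub_nonneg.mpr (hle x hx')) h1 (by linarith))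
    refine ne_top_of_le_ne_top ?_ hbd
    rw [setLIntegral_const]
    exact ENNReal.mul_ne_top ENNReal.ofReal_ne_top (by simp [Real.volume_Ioc])
  -- rewrite both integrals as toReal of lintegrals
  have eqR : ∫ x in Icc (0:ℝ) 1, |u x - l x| ^ p
      = (∫⁻ x in Ioc (0:ℝ) 1, ENNReal.ofReal ((u x - l x) ^ p)).toReal := by
    rw [setIntegral_congr_set (Ioc_ae_eq_Icc (a := (0:ℝ)) (b := (1:ℝ))).symm]
    rw [integral_eq_lintegral_of_nonneg_ae (f := fun x => |u x - l x| ^ p)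
      (ae_of_all _ fun x => Real.rpow_nonneg (abs_nonneg _) _)
      ((((hum.sub hlm).abs.pow measurable_const)).aestronglyMeasurable)]
    refine congrArg ENNReal.toReal
      (setLIntegral_congr_fun measurableSet_Ioc (fun x hx => ?_))
    rw [abs_of_nonneg (sub_nonneg.mpr (hle x (Ioc_subset_Icc_self hx)))]
  have eqL : ∫ x in Icc (0:ℝ) 1, |rearr u x - rearr l x| ^ p
      = (∫⁻ x in Ioc (0:ℝ) 1, ENNReal.ofReal ((cl C u x - cl C l x) ^ p)).toReal := by
    rw [setIntegral_congr_set (Ioc_ae_eq_Icc (a := (0:ℝ)) (b := (1:ℝ))).symm]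
    have hrw : ∫ x in Ioc (0:ℝ) 1, |rearr u x - rearr l x| ^ p
        = ∫ x in Ioc (0:ℝ) 1, |cl C u x - cl C l x| ^ p := by
      refine setIntegral_congr_fun measurableSet_Ioc fun x hx => ?_
      rw [cl_eq hx, cl_eq hx]
    rw [hrw]
    rw [integral_eq_lintegral_of_nonneg_ae (f := fun x => |cl C u x - cl C l x| ^ p)
      (ae_of_all _ fun x => Real.rpow_nonneg (abs_nonneg _) _)
      (((((cl_measurable hbu).sub (cl_measurable hbl)).abs.pow
        measurable_const)).aestronglyMeasurable)]
    refine congrArg ENNReal.toReal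
      (setLIntegral_congr_fun measurableSet_Ioc (fun x hx => ?_))
    rw [abs_of_nonneg (sub_nonneg.mpr (hcle x hx))]
  rw [eqL, eqR]
  exact Real.rpow_le_rpow ENNReal.toReal_nonneg (ENNReal.toReal_mono hfin key)
    (one_div_nonneg.mpr (by linarith))
end
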